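/- Let n ≥ 2 and let a_1 ≥ ... ≥ a_n ≥ 1 be integers with a_1 ≤ n - 1. Then the ideal I_{≥t} with I = (x_1^{a_1}, ..., x_n^{a_n}) and t = a_2 + ... + a_n is a stable monomial ideal; that is, for every monomial u ∈ I_{≥t} and every j < m(u), where m(u) = max{i : x_i divides u}, the monomial x_j·u/x_{m(u)} also lies in I_{≥t}. -/

import Mathlib

open MvPolynomial

noncomputable section

/-- The ideal generated by all monomials of `I` of total degree at least `t`. -/
def trunc {K : Type*} [Field K] {n : ℕ} (I : Ideal (MvPolynomial (Fin n) K)) (t : ℕ) :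
    Ideal (MvPolynomial (Fin n) K) :=
  Ideal.span { p | ∃ v : Fin n →₀ ℕ, p = monomial v (1 : K) ∧ p ∈ I ∧ t ≤ v.sum fun _ e => e }

/-- A monomial ideal `J` is stable if for every monomial `x^v ∈ J` and every `j < m(v)`,
where `m(v)` is the largest index of a variable dividing `x^v`, the monomial
`x_j · x^v / x_{m(v)}` also lies in `J`. -/
def IsStable {K : Type*} [Field K] {n : ℕ} (J : Ideal (MvPolynomial (Fin n) K)) : Prop :=
  ∀ v : Fin n →₀ ℕ, monomial v (1 : K) ∈ J →
    ∀ m : Fin n, m ∈ v.support → (∀ i ∈ v.support, i ≤ m) →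
      ∀ j : Fin n, j < m →
        monomial (v - Finsupp.single m 1 + Finsupp.single j 1) (1 : K) ∈ J

lemma mem_span_pows_iff {K : Type*} [Field K] {n : ℕ} (a : Fin n → ℕ) (w : Fin n →₀ ℕ) :
    monomial w (1 : K) ∈ Ideal.span (Set.range fun i : Fin n => (X i : MvPolynomial (Fin n) K) ^ a i)
      ↔ ∃ i, a i ≤ w i := by
  have hset : (Set.range fun i : Fin n => (X i : MvPolynomial (Fin n) K) ^ a i)
      = (fun s => monomial s (1 : K)) '' (Set.range fun i : Fin n => Finsupp.single i (a i)) := by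
    ext p
    simp [X_pow_eq_monomial, Set.range_comp]
  rw [hset, mem_ideal_span_monomial_image]
  simp [support_monomial, Finsupp.single_le_iff]

lemma mem_trunc_iff {K : Type*} [Field K] {n : ℕ} (a : Fin n → ℕ) (t : ℕ) (v : Fin n →₀ ℕ) :
    monomial v (1 : K) ∈ trunc (Ideal.span (Set.range fun i : Fin n =>
        (X i : MvPolynomial (Fin n) K) ^ a i)) t
      ↔ (∃ i, a i ≤ v i) ∧ t ≤ v.sum fun _ e => e := by
  have hset : { p | ∃ w : Fin n →₀ ℕ, p = monomial w (1 : K) ∧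
      p ∈ Ideal.span (Set.range fun i : Fin n => (X i : MvPolynomial (Fin n) K) ^ a i) ∧
      t ≤ w.sum fun _ e => e }
      = (fun s => monomial s (1 : K)) ''
        { w | (∃ i, a i ≤ w i) ∧ t ≤ w.sum fun _ e => e } := by
    ext p
    constructor
    · rintro ⟨w, rfl, hI, ht⟩
      exact ⟨w, ⟨(mem_span_pows_iff a w).mp hI, ht⟩, rfl⟩
    · rintro ⟨w, ⟨hw, ht⟩, rfl⟩
      exact ⟨w, rfl, (mem_span_pows_iff a w).mpr hw, ht⟩
  classical
  rw [trunc, hset, mem_ideal_span_monomial_image]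
  constructor
  · intro h
    obtain ⟨w, ⟨⟨i, hi⟩, ht⟩, hle⟩ := h v (by simp [support_monomial])
    refine ⟨⟨i, hi.trans (hle i)⟩, ht.trans ?_⟩
    rw [Finsupp.sum_fintype _ _ (fun _ => rfl), Finsupp.sum_fintype _ _ (fun _ => rfl)]
    exact Finset.sum_le_sum fun i _ => hle i
  · intro h xi hxi
    rw [support_monomial, if_neg one_ne_zero, Finset.mem_singleton] at hxi
    subst hxi
    exact ⟨xi, h, le_rfl⟩

theorem stmt2' {K : Type*} [Field K] {n : ℕ} (hn : 2 ≤ n) (a : Fin n → ℕ)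
    (hdec : ∀ i j : Fin n, i ≤ j → a j ≤ a i) (hpos : ∀ i, 1 ≤ a i)
    (hbound : a ⟨0, Nat.lt_of_lt_of_le Nat.two_pos hn⟩ ≤ n - 1) :
    ∀ v : Fin n →₀ ℕ, monomial v (1 : K) ∈ (trunc (Ideal.span (Set.range fun i : Fin n => (X i : MvPolynomial (Fin n) K) ^ a i))
      (∑ i ∈ Finset.univ.erase (⟨0, Nat.lt_of_lt_of_le Nat.two_pos hn⟩ : Fin n), a i)) →
    ∀ m : Fin n, m ∈ v.support → (∀ i ∈ v.support, i ≤ m) →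
      ∀ j : Fin n, j < m →
        monomial (v - Finsupp.single m 1 + Finsupp.single j 1) (1 : K) ∈ (trunc (Ideal.span (Set.range fun i : Fin n => (X i : MvPolynomial (Fin n) K) ^ a i))
      (∑ i ∈ Finset.univ.erase (⟨0, Nat.lt_of_lt_of_le Nat.two_pos hn⟩ : Fin n), a i)) := by
  intro v hv m hm hmax j hjm
  set t := ∑ i ∈ Finset.univ.erase (⟨0, Nat.lt_of_lt_of_le Nat.two_pos hn⟩ : Fin n), a i with ht
  rw [mem_trunc_iff] at hv ⊢
  obtain ⟨⟨i0, hi0⟩, hdeg⟩ := hv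
  have hjm' : j ≠ m := ne_of_lt hjm
  have hvm : 1 ≤ v m := Nat.one_le_iff_ne_zero.mpr (Finsupp.mem_support_iff.mp hm)
  set v' := v - Finsupp.single m 1 + Finsupp.single j 1 with hv'
  have happ : ∀ i, v' i = v i - (if i = m then 1 else 0) + (if i = j then 1 else 0) := by
    intro i
    simp [hv', Finsupp.tsub_apply, Finsupp.single_apply, eq_comm]
  have hsum : (v'.sum fun _ e => e) = v.sum fun _ e => e := by
    rw [Finsupp.sum_fintype _ _ (fun _ => rfl), Finsupp.sum_fintype _ _ (fun _ => rfl)]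
    rw [← Finset.add_sum_erase _ _ (Finset.mem_univ m), ← Finset.add_sum_erase _ _ (Finset.mem_univ m)]
    have hje : j ∈ Finset.univ.erase m := Finset.mem_erase.mpr ⟨hjm', Finset.mem_univ j⟩
    rw [← Finset.add_sum_erase _ _ hje, ← Finset.add_sum_erase _ v hje]
    have hrest : ∑ i ∈ (Finset.univ.erase m).erase j, v' i
        = ∑ i ∈ (Finset.univ.erase m).erase j, v i := by
      apply Finset.sum_congr rfl
      intro i hi
      have h1 : i ≠ j := (Finset.mem_erase.mp hi).1
      have h2 : i ≠ m := (Finset.mem_erase.mp (Finset.mem_erase.mp hi).2).1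
      simp [happ i, h1, h2]
    rw [hrest]
    have h1 : v' m = v m - 1 := by simp [happ m, hjm'.symm]
    have h2 : v' j = v j + 1 := by simp [happ j, hjm']
    omega
  refine ⟨?_, hsum ▸ hdeg⟩
  by_contra hcon
  push_neg at hcon
  -- the witness must be m, and v m = a m
  have hvm_eq : v m = a m := by
    rcases eq_or_ne i0 m with rfl | hne
    · have hv'i0 := hcon i0
      rw [happ i0, if_pos rfl, if_neg hjm'.symm] at hv'i0
      omega
    · exfalso
      have hv'i0 := hcon i0
      rw [happ i0, if_neg hne] at hv'i0
      by_cases hj : i0 = j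
      · rw [if_pos hj] at hv'i0; omega
      · rw [if_neg hj] at hv'i0; omega
  -- pointwise bound on Iic m
  have hpt : ∀ i ∈ Finset.Iic m, v i + (if i = j then 2 else if i = m then 0 else 1) ≤ a i := by
    intro i _
    have hv'i := hcon i
    rw [happ i] at hv'i
    by_cases h1 : i = j
    · subst h1
      rw [if_neg hjm', if_pos rfl] at hv'i
      rw [if_pos rfl]
      omega
    · by_cases h2 : i = m
      · subst h2
        rw [if_pos rfl, if_neg h1] at hv'i
        rw [if_neg h1, if_pos rfl]
        omega
      · rw [if_neg h2, if_neg h1] at hv'i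
        rw [if_neg h1, if_neg h2]
        omega
  have hzero : ∀ i ∉ Finset.Iic m, v i = 0 := by
    intro i hi
    by_contra h
    exact hi (Finset.mem_Iic.mpr (hmax i (Finsupp.mem_support_iff.mpr h)))
  -- sum of the d-weights over Iic m equals card
  have hjIic : j ∈ Finset.Iic m := Finset.mem_Iic.mpr hjm.le
  have hmIic : m ∈ Finset.Iic m := Finset.mem_Iic.mpr le_rfl
  have hsum_d : ∑ i ∈ Finset.Iic m, (if i = j then 2 else if i = m then 0 else 1)
      = (Finset.Iic m).card := by
    rw [← Finset.add_sum_erase _ _ hjIic]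
    have hme : m ∈ (Finset.Iic m).erase j := Finset.mem_erase.mpr ⟨hjm'.symm, hmIic⟩
    rw [← Finset.add_sum_erase _ _ hme]
    have : ∑ i ∈ ((Finset.Iic m).erase j).erase m, (if i = j then 2 else if i = m then 0 else 1)
        = ∑ i ∈ ((Finset.Iic m).erase j).erase m, 1 := by
      apply Finset.sum_congr rfl
      intro i hi
      have h1 : i ≠ m := (Finset.mem_erase.mp hi).1
      have h2 : i ≠ j := (Finset.mem_erase.mp (Finset.mem_erase.mp hi).2).1
      simp [h1, h2]
    rw [this, Finset.sum_const, smul_eq_mul, mul_one,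
      Finset.card_erase_of_mem hme, Finset.card_erase_of_mem hjIic]
    have : 2 ≤ (Finset.Iic m).card := by
      have : ({j, m} : Finset (Fin n)) ⊆ Finset.Iic m := by
        intro x hx
        rcases Finset.mem_insert.mp hx with rfl | hx
        · exact hjIic
        · rw [Finset.mem_singleton.mp hx]; exact hmIic
      calc 2 = ({j, m} : Finset (Fin n)).card := by rw [Finset.card_insert_of_notMem (by simp [hjm']), Finset.card_singleton]
        _ ≤ _ := Finset.card_le_card this
    simp [hjm', hjm'.symm]
    omega
  -- main inequality
  have hIic_sum : ∑ i ∈ Finset.Iic m, v i + (Finset.Iic m).card ≤ ∑ i ∈ Finset.Iic m, a i := by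
    rw [← hsum_d, ← Finset.sum_add_distrib]
    exact Finset.sum_le_sum hpt
  have hcompl : (Finset.Iic m)ᶜ.card ≤ ∑ i ∈ (Finset.Iic m)ᶜ, a i := by
    calc (Finset.Iic m)ᶜ.card = ∑ i ∈ (Finset.Iic m)ᶜ, 1 := by simp
      _ ≤ _ := Finset.sum_le_sum fun i _ => hpos i
  have hvsum : (v.sum fun _ e => e) = ∑ i ∈ Finset.Iic m, v i := by
    rw [Finsupp.sum_fintype _ _ (fun _ => rfl)]
    rw [← Finset.sum_add_sum_compl (Finset.Iic m) v]
    rw [Finset.sum_eq_zero fun i hi => hzero i (Finset.mem_compl.mp hi)]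
    omega
  have hasum : ∑ i ∈ Finset.Iic m, a i + ∑ i ∈ (Finset.Iic m)ᶜ, a i = ∑ i, a i :=
    Finset.sum_add_sum_compl (Finset.Iic m) a
  have hta : t + a ⟨0, Nat.lt_of_lt_of_le Nat.two_pos hn⟩ = ∑ i, a i := by
    rw [ht, Finset.sum_erase_add _ _ (Finset.mem_univ _)]
  have hcards : (Finset.Iic m).card + (Finset.Iic m)ᶜ.card = n := by
    rw [Finset.card_add_card_compl]
    simp
  have := hdeg
  rw [hvsum] at this
  omega

/-- With `n ≥ 2`, `n-1 ≥ a_1 ≥ ⋯ ≥ a_n ≥ 1` and `t = a_2 + ⋯ + a_n`,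
the ideal `I_{≥t}` with `I = (x_1^{a_1},…,x_n^{a_n})` is stable. -/
theorem stmt2 {K : Type*} [Field K] {n : ℕ} (hn : 2 ≤ n) (a : Fin n → ℕ)
    (hdec : ∀ i j : Fin n, i ≤ j → a j ≤ a i) (hpos : ∀ i, 1 ≤ a i)
    (hbound : a ⟨0, by omega⟩ ≤ n - 1) :
    IsStable (trunc (Ideal.span (Set.range fun i : Fin n => (X i : MvPolynomial (Fin n) K) ^ a i))
      (∑ i ∈ Finset.univ.erase (⟨0, by omega⟩ : Fin n), a i)) :=
  stmt2' hn a hdec hpos hbound
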